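/- Fix K, σ, τ > 0 and y > 0, let Φ be the standard normal cumulative distribution function, and for S > 0 set d1(S) = (ln(S/K) + (σ²/2)τ)/(σ√τ), d2(S) = d1(S) − σ√τ and β(S) = y·(S − K)/(S·Φ(d1(S)) − K·Φ(d2(S))). Then β(S) tends to y as S tends to +∞. That is, in the limit of the debt asset price increasing without bound, exactly y at-the-money call options fund the debt shortfall of a position of y debt units. -/

import Mathlib

open Real Filter

/-- The cumulative distribution function of the standard normal distribution
(Gaussian measure on ℝ with mean 0 and variance 1). -/
noncomputable def Φ (x : ℝ) : ℝ :=
  (ProbabilityTheory.gaussianReal 0 1 (Set.Iic x)).toReal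

lemma Phi_tendsto : Filter.Tendsto Φ Filter.atTop (nhds 1) := by
  have h : Φ = ProbabilityTheory.cdf (ProbabilityTheory.gaussianReal 0 1) := by
    funext x
    rw [ProbabilityTheory.cdf_eq_real]
    rfl
  rw [h]
  exact ProbabilityTheory.tendsto_cdf_atTop _

/-- As the debt price S → +∞, the call-hedging ratio β(S) = y·(S − K)/V_call(S)
tends to the reserve size y. -/
theorem beta_tendsto_reserve (K σ τ y : ℝ) (hK : 0 < K) (hσ : 0 < σ) (hτ : 0 < τ)
    (hy : 0 < y)
    (d1 d2 β : ℝ → ℝ)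
    (hd1 : ∀ S, d1 S = (Real.log (S / K) + (σ ^ 2 / 2) * τ) / (σ * Real.sqrt τ))
    (hd2 : ∀ S, d2 S = d1 S - σ * Real.sqrt τ)
    (hβ : ∀ S, β S = y * (S - K) / (S * Φ (d1 S) - K * Φ (d2 S))) :
    Filter.Tendsto β Filter.atTop (nhds y) := by
  have hst : 0 < σ * Real.sqrt τ := mul_pos hσ (Real.sqrt_pos.2 hτ)
  have hd1top : Tendsto d1 atTop atTop := by
    have hlog : Tendsto (fun S => Real.log (S / K)) atTop atTop :=
      Real.tendsto_log_atTop.comp (tendsto_id.atTop_div_const hK)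
    have := (tendsto_atTop_add_const_right _ ((σ ^ 2 / 2) * τ) hlog).atTop_div_const hst
    refine this.congr fun S => ?_
    rw [hd1]
  have hd2top : Tendsto d2 atTop atTop := by
    have := tendsto_atTop_add_const_right _ (-(σ * Real.sqrt τ)) hd1top
    refine this.congr fun S => ?_
    rw [hd2]; ring
  have hΦ1 : Tendsto (fun S => Φ (d1 S)) atTop (nhds 1) := Phi_tendsto.comp hd1top
  have hΦ2 : Tendsto (fun S => Φ (d2 S)) atTop (nhds 1) := Phi_tendsto.comp hd2top
  have hKS : Tendsto (fun S : ℝ => K / S) atTop (nhds 0) :=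
    tendsto_const_nhds.div_atTop tendsto_id
  have hnum : Tendsto (fun S : ℝ => y * (1 - K / S)) atTop (nhds y) := by
    have h1 : Tendsto (fun S : ℝ => (1 : ℝ) - K / S) atTop (nhds (1 - 0)) :=
      Tendsto.sub tendsto_const_nhds hKS
    simpa using h1.const_mul y
  have hden : Tendsto (fun S : ℝ => Φ (d1 S) - (K / S) * Φ (d2 S)) atTop (nhds 1) := by
    have := hΦ1.sub (hKS.mul hΦ2)
    simpa using this
  have hlim : Tendsto (fun S : ℝ => y * (1 - K / S) / (Φ (d1 S) - (K / S) * Φ (d2 S)))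
      atTop (nhds y) := by
    have h := hnum.div hden one_ne_zero
    rw [div_one] at h
    exact h
  refine hlim.congr' ?_
  filter_upwards [eventually_gt_atTop (0 : ℝ)] with S hS
  rw [hβ]
  have hS' : S ≠ 0 := ne_of_gt hS
  have e1 : y * (1 - K / S) = y * (S - K) / S := by field_simp
  have e2 : Φ (d1 S) - K / S * Φ (d2 S) = (S * Φ (d1 S) - K * Φ (d2 S)) / S := by
    field_simp
  rw [e1, e2, div_div_div_cancel_right₀]
  exact hS'
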